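/- arXiv:1604.00277 — 7 statements merged into one kernel-verified Lean document; each statement's English description precedes it below -/
import Mathlib

section
/- Let w1, w2 be elements of ℤ^n that can be extended to a ℤ-basis of ℤ^n, and let w~ = α·w1 + β·w2 with α, β ∈ ℤ. If the pair {-w1, w~} can also be extended to a ℤ-basis of ℤ^n, then β = 1 or β = -1. -/
/-- If `{w1, w2}` extends to a ℤ-basis of ℤⁿ and `{-w1, α•w1+β•w2}` also extends to a
ℤ-basis of ℤⁿ, then `β = ±1`. -/
theorem stmt_0 (n : ℕ) (w1 w2 : Fin n → ℤ) (α β : ℤ)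
    (b : Module.Basis (Fin n) ℤ (Fin n → ℤ)) (i j : Fin n) (hij : i ≠ j)
    (hbi : b i = w1) (hbj : b j = w2)
    (b' : Module.Basis (Fin n) ℤ (Fin n → ℤ)) (i' j' : Fin n) (hij' : i' ≠ j')
    (hbi' : b' i' = -w1) (hbj' : b' j' = α • w1 + β • w2) :
    β = 1 ∨ β = -1 := by
  have h0 : b'.repr (-w1) j' = 0 := by
    rw [← hbi', b'.repr_self]
    simp [Finsupp.single_apply, hij']
  have hw1 : b'.repr w1 j' = 0 := by
    rw [map_neg] at h0
    simpa [neg_eq_zero] using h0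
  have h1 : b'.repr (α • w1 + β • w2) j' = 1 := by
    rw [← hbj', b'.repr_self]
    simp
  rw [map_add, map_smul, map_smul, Finsupp.add_apply, Finsupp.smul_apply,
    Finsupp.smul_apply, hw1] at h1
  have : β * b'.repr w2 j' = 1 := by simpa using h1
  exact Int.isUnit_iff.mp (IsUnit.of_mul_eq_one _ this)
end

section
/- Let n = 2m ≥ 2 be even and let h = (h_0, ..., h_n) be integers satisfying the symmetry h_j = h_{n-j} for all j. Define f_1 = Σ_{l=1}^{n} l · h_{n-l} and f_2 = Σ_{l=2}^{n} C(l,2) · h_{n-l}. Then 12·f_2 + (5-3n)·f_1 = 12·Σ_{k=1}^{m} k^2 · h_{m-k} - m · Σ_{k=0}^{n} h_k. -/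
open Finset

private lemma two_choose (l : ℕ) : 2 * ((Nat.choose l 2 : ℕ) : ℤ) = (l : ℤ) ^ 2 - (l : ℤ) := by
  induction l with
  | zero => simp
  | succ k ih =>
    rw [Nat.choose_succ_succ, Nat.choose_one_right]
    push_cast
    push_cast at ih
    ring_nf
    ring_nf at ih
    linarith

private lemma foldSum (m : ℕ) (g : ℕ → ℤ) :
    ∑ j ∈ range (2 * m + 1), g j = ∑ j ∈ range m, (g j + g (2 * m - j)) + g m := by
  have h1 : ∑ j ∈ range (2 * m + 1), g j
      = ∑ j ∈ range m, g j + ∑ j ∈ Finset.Ico m (2 * m + 1), g j := by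
    rw [range_eq_Ico, ← Finset.sum_Ico_consecutive g (Nat.zero_le m) (by omega), range_eq_Ico]
  have h2 : ∑ j ∈ Finset.Ico m (2 * m + 1), g j = ∑ j ∈ range (m + 1), g (m + j) := by
    rw [Finset.sum_Ico_eq_sum_range]
    apply Finset.sum_congr
    · congr 1; omega
    · intro j _; rfl
  have h3 : ∑ j ∈ range (m + 1), g (m + j)
      = ∑ j ∈ range m, g (m + (j + 1)) + g (m + 0) := Finset.sum_range_succ' _ m
  have h4 : ∑ j ∈ range m, g (2 * m - j) = ∑ j ∈ range m, g (m + (j + 1)) := by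
    rw [← Finset.sum_range_reflect (fun j => g (m + (j + 1))) m]
    apply Finset.sum_congr rfl
    intro j hj
    simp only [Finset.mem_range] at hj
    congr 1
    omega
  rw [h1, h2, h3, Finset.sum_add_distrib, h4]
  simp only [Nat.add_zero]
  ring

/-- Even-dimensional case: `12 f₂ + (5 - 3n) f₁ = C(n, h)` for a symmetric `h`-vector,
with `n = 2m`. -/
theorem stmt_2 (m : ℕ) (hm : 1 ≤ m) (h : ℕ → ℤ)
    (hsym : ∀ j ≤ 2 * m, h j = h (2 * m - j)) :
    12 * (∑ l ∈ Finset.Icc 2 (2 * m), (Nat.choose l 2 : ℤ) * h (2 * m - l))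
      + (5 - 3 * (2 * m : ℤ)) * (∑ l ∈ Finset.Icc 1 (2 * m), (l : ℤ) * h (2 * m - l))
    = 12 * (∑ k ∈ Finset.Icc 1 m, (k : ℤ) ^ 2 * h (m - k))
      - (m : ℤ) * (∑ k ∈ Finset.range (2 * m + 1), h k) := by
  set E : ℤ := ∑ j ∈ range m, (12 * ((m - j : ℕ) : ℤ) ^ 2 - 2 * (m : ℤ)) * h j
      - (m : ℤ) * h m with hE
  have hA : ∑ l ∈ Finset.Icc 2 (2 * m), (Nat.choose l 2 : ℤ) * h (2 * m - l)
      = ∑ l ∈ Finset.range (2 * m + 1), (Nat.choose l 2 : ℤ) * h (2 * m - l) := by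
    apply Finset.sum_subset
    · intro x hx
      simp only [Finset.mem_Icc] at hx
      simp only [Finset.mem_range]
      omega
    · intro x hx hx2
      simp only [Finset.mem_range] at hx
      simp only [Finset.mem_Icc] at hx2
      have : x < 2 := by omega
      interval_cases x <;> simp
  have hB : ∑ l ∈ Finset.Icc 1 (2 * m), (l : ℤ) * h (2 * m - l)
      = ∑ l ∈ Finset.range (2 * m + 1), (l : ℤ) * h (2 * m - l) := by
    apply Finset.sum_subset
    · intro x hx
      simp only [Finset.mem_Icc] at hx
      simp only [Finset.mem_range]
      omega
    · intro x hx hx2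
      simp only [Finset.mem_range] at hx
      simp only [Finset.mem_Icc] at hx2
      have : x = 0 := by omega
      subst this; simp
  have hC : ∑ k ∈ Finset.Icc 1 m, (k : ℤ) ^ 2 * h (m - k)
      = ∑ k ∈ Finset.range (m + 1), (k : ℤ) ^ 2 * h (m - k) := by
    apply Finset.sum_subset
    · intro x hx
      simp only [Finset.mem_Icc] at hx
      simp only [Finset.mem_range]
      omega
    · intro x hx hx2
      simp only [Finset.mem_range] at hx
      simp only [Finset.mem_Icc] at hx2
      have : x = 0 := by omega
      subst this; simp
  -- abbreviation for the coefficient after reflection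
  set G : ℕ → ℤ := fun j =>
    12 * (Nat.choose (2 * m - j) 2 : ℤ) + (5 - 3 * (2 * m : ℤ)) * ((2 * m - j : ℕ) : ℤ)
    with hG
  have hL : 12 * (∑ l ∈ Finset.Icc 2 (2 * m), (Nat.choose l 2 : ℤ) * h (2 * m - l))
      + (5 - 3 * (2 * m : ℤ)) * (∑ l ∈ Finset.Icc 1 (2 * m), (l : ℤ) * h (2 * m - l)) = E := by
    rw [hA, hB, Finset.mul_sum, Finset.mul_sum, ← Finset.sum_add_distrib]
    have step1 : ∑ l ∈ Finset.range (2 * m + 1),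
        (12 * ((Nat.choose l 2 : ℤ) * h (2 * m - l))
          + (5 - 3 * (2 * m : ℤ)) * ((l : ℤ) * h (2 * m - l)))
        = ∑ j ∈ Finset.range (2 * m + 1), G j * h j := by
      rw [← Finset.sum_range_reflect (fun j => G j * h j) (2 * m + 1)]
      apply Finset.sum_congr rfl
      intro l hl
      simp only [Finset.mem_range] at hl
      have e1 : 2 * m + 1 - 1 - l = 2 * m - l := by omega
      have e2 : 2 * m - (2 * m - l) = l := by omega
      rw [e1, hG]
      simp only [e2]
      ring
    rw [step1, foldSum m (fun j => G j * h j)]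
    have step2 : ∑ j ∈ range m, (G j * h j + G (2 * m - j) * h (2 * m - j))
        = ∑ j ∈ range m, (12 * ((m - j : ℕ) : ℤ) ^ 2 - 2 * (m : ℤ)) * h j := by
      apply Finset.sum_congr rfl
      intro j hj
      simp only [Finset.mem_range] at hj
      have hj2 : j ≤ 2 * m := by omega
      have e2 : 2 * m - (2 * m - j) = j := by omega
      have hh : h (2 * m - j) = h j := (hsym j hj2).symm
      rw [hh, hG]
      simp only [e2]
      have c1 := two_choose j
      have c2 := two_choose (2 * m - j)
      have e3 : ((2 * m - j : ℕ) : ℤ) = 2 * (m : ℤ) - (j : ℤ) := by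
        push_cast [Nat.cast_sub hj2]; ring
      have e4 : ((m - j : ℕ) : ℤ) = (m : ℤ) - (j : ℤ) := by
        push_cast [Nat.cast_sub (le_of_lt hj)]; ring
      rw [e3] at c2
      rw [e3, e4]
      push_cast
      linear_combination (6 * h j) * c1 + (6 * h j) * c2
    have step3 : G m = -(m : ℤ) := by
      rw [hG]
      have e5 : 2 * m - m = m := by omega
      simp only [e5]
      have c1 := two_choose m
      push_cast
      linear_combination 6 * c1
    rw [step2, step3, hE]
    ring
  have hR : 12 * (∑ k ∈ Finset.Icc 1 m, (k : ℤ) ^ 2 * h (m - k))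
      - (m : ℤ) * (∑ k ∈ Finset.range (2 * m + 1), h k) = E := by
    rw [hC, foldSum m h]
    have step4 : ∑ k ∈ Finset.range (m + 1), (k : ℤ) ^ 2 * h (m - k)
        = ∑ j ∈ Finset.range m, ((m - j : ℕ) : ℤ) ^ 2 * h j := by
      rw [← Finset.sum_range_reflect (fun k => (k : ℤ) ^ 2 * h (m - k)) (m + 1)]
      rw [Finset.sum_range_succ]
      have : ((m + 1 - 1 - m : ℕ) : ℤ) ^ 2 * h (m - (m + 1 - 1 - m)) = 0 := by
        simp
      rw [this, add_zero]
      apply Finset.sum_congr rfl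
      intro j hj
      simp only [Finset.mem_range] at hj
      have e1 : m + 1 - 1 - j = m - j := by omega
      have e2 : m - (m - j) = j := by omega
      rw [e1, e2]
    have step5 : ∑ j ∈ range m, (h j + h (2 * m - j)) = ∑ j ∈ range m, 2 * h j := by
      apply Finset.sum_congr rfl
      intro j hj
      simp only [Finset.mem_range] at hj
      rw [(hsym j (by omega)).symm]
      ring
    rw [step4, step5, hE, mul_add, sub_add_eq_sub_sub, Finset.mul_sum, Finset.mul_sum,
      ← Finset.sum_sub_distrib]
    congr 1
    apply Finset.sum_congr rfl
    intro j _
    ring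
  rw [hL, hR]
end

section
/- Let n = 2m+1 ≥ 3 be odd and let h = (h_0, ..., h_n) be integers satisfying h_j = h_{n-j} for all j. Define f_1 = Σ_{l=1}^{n} l · h_{n-l} and f_2 = Σ_{l=2}^{n} C(l,2) · h_{n-l}. Then 12·f_2 + (5-3n)·f_1 = 12·Σ_{k=1}^{m} k(k+1) · h_{m-k} - (m-1) · Σ_{k=0}^{n} h_k. -/
open Finset

private lemma choose2_aux (l : ℕ) : 2 * (l.choose 2 : ℤ) = l * (l - 1) := by
  induction l with
  | zero => simp
  | succ n ih =>
    rw [Nat.choose_succ_succ, Nat.choose_one_right]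
    push_cast
    push_cast at ih
    linarith [ih]

/-- Odd-dimensional case: `12 f₂ + (5 - 3n) f₁ = C(n, h)` for a symmetric `h`-vector,
with `n = 2m + 1`. -/
theorem stmt_3 (m : ℕ) (hm : 1 ≤ m) (h : ℕ → ℤ)
    (hsym : ∀ j ≤ 2 * m + 1, h j = h (2 * m + 1 - j)) :
    12 * (∑ l ∈ Finset.Icc 2 (2 * m + 1), (Nat.choose l 2 : ℤ) * h (2 * m + 1 - l))
      + (5 - 3 * (2 * m + 1 : ℤ)) * (∑ l ∈ Finset.Icc 1 (2 * m + 1), (l : ℤ) * h (2 * m + 1 - l))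
    = 12 * (∑ k ∈ Finset.Icc 1 m, (k : ℤ) * (k + 1) * h (m - k))
      - ((m : ℤ) - 1) * (∑ k ∈ Finset.range (2 * m + 2), h k) := by
  set n := 2 * m + 1 with hn
  -- extend the Icc sums to range sums over l
  have e2 : ∑ l ∈ Icc 2 n, (Nat.choose l 2 : ℤ) * h (n - l)
      = ∑ l ∈ range (n + 1), (Nat.choose l 2 : ℤ) * h (n - l) := by
    apply sum_subset
    · intro l hl; simp only [mem_Icc] at hl; simp only [mem_range]; omega
    · intro l hl hnl
      simp only [mem_range] at hl
      simp only [mem_Icc] at hnl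
      have : l < 2 := by omega
      rw [Nat.choose_eq_zero_of_lt this]
      simp
  have e1 : ∑ l ∈ Icc 1 n, (l : ℤ) * h (n - l)
      = ∑ l ∈ range (n + 1), (l : ℤ) * h (n - l) := by
    apply sum_subset
    · intro l hl; simp only [mem_Icc] at hl; simp only [mem_range]; omega
    · intro l hl hnl
      simp only [mem_range] at hl
      simp only [mem_Icc] at hnl
      have : l = 0 := by omega
      simp [this]
  -- reflect them to sums over j with h j
  have r2 : ∑ l ∈ range (n + 1), (Nat.choose l 2 : ℤ) * h (n - l)
      = ∑ j ∈ range (n + 1), (Nat.choose (n - j) 2 : ℤ) * h j := by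
    rw [← Finset.sum_range_reflect (fun l => (Nat.choose l 2 : ℤ) * h (n - l)) (n + 1)]
    apply sum_congr rfl
    intro j hj
    simp only [mem_range] at hj
    have h1 : n + 1 - 1 - j = n - j := by omega
    have h2 : n - (n - j) = j := by omega
    simp only [h1, h2]
  have r1 : ∑ l ∈ range (n + 1), (l : ℤ) * h (n - l)
      = ∑ j ∈ range (n + 1), ((n - j : ℕ) : ℤ) * h j := by
    rw [← Finset.sum_range_reflect (fun l => (l : ℤ) * h (n - l)) (n + 1)]
    apply sum_congr rfl
    intro j hj
    simp only [mem_range] at hj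
    have h1 : n + 1 - 1 - j = n - j := by omega
    have h2 : n - (n - j) = j := by omega
    simp only [h1, h2]
  rw [e2, e1, r2, r1]
  -- symmetrization lemma
  have sym : ∀ c : ℕ → ℤ, ∑ j ∈ range (n + 1), c j * h j
      = ∑ j ∈ range (n + 1), c (n - j) * h j := by
    intro c
    rw [← Finset.sum_range_reflect (fun j => c (n - j) * h j) (n + 1)]
    apply sum_congr rfl
    intro j hj
    simp only [mem_range] at hj
    have h1 : n + 1 - 1 - j = n - j := by omega
    have h2 : n - (n - j) = j := by omega
    have h3 : h j = h (n - j) := hsym j (by omega)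
    simp only [h1, h2]
    rw [← h3]
  -- the combined coefficient
  set c : ℕ → ℤ := fun j => 12 * (Nat.choose (n - j) 2 : ℤ) + (5 - 3 * (n : ℤ)) * ((n - j : ℕ) : ℤ)
    with hc
  have combine : 12 * (∑ j ∈ range (n + 1), (Nat.choose (n - j) 2 : ℤ) * h j)
      + (5 - 3 * (n : ℤ)) * (∑ j ∈ range (n + 1), ((n - j : ℕ) : ℤ) * h j)
      = ∑ j ∈ range (n + 1), c j * h j := by
    rw [Finset.mul_sum, Finset.mul_sum, ← Finset.sum_add_distrib]
    apply sum_congr rfl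
    intro j _
    simp only [hc]
    ring
  rw [show (5 - 3 * (2 * (m : ℤ) + 1)) = 5 - 3 * (n : ℤ) by rw [hn]; push_cast; ring, combine]
  -- pointwise value of c j + c (n - j)
  have cpt : ∀ j ∈ range (n + 1), c j + c (n - j)
      = 12 * ((j : ℤ) - m) * ((j : ℤ) - m - 1) - 2 * ((m : ℤ) - 1) := by
    intro j hj
    simp only [mem_range] at hj
    have hjn : j ≤ n := by omega
    have h2 : n - (n - j) = j := by omega
    simp only [hc, h2]
    have c1 := choose2_aux (n - j)
    have c2 := choose2_aux j
    have hcast : ((n - j : ℕ) : ℤ) = (n : ℤ) - (j : ℤ) := by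
      push_cast [Nat.cast_sub hjn]; ring
    rw [hcast] at c1 ⊢
    have hnc : (n : ℤ) = 2 * (m : ℤ) + 1 := by rw [hn]; push_cast; ring
    rw [hnc] at c1 ⊢
    nlinarith [c1, c2]
  -- key sum identity after symmetrization
  have doub : 2 * (∑ j ∈ range (n + 1), c j * h j)
      = ∑ j ∈ range (n + 1), (12 * ((j : ℤ) - m) * ((j : ℤ) - m - 1) - 2 * ((m : ℤ) - 1)) * h j := by
    have := sym c
    calc 2 * (∑ j ∈ range (n + 1), c j * h j)
        = (∑ j ∈ range (n + 1), c j * h j) + (∑ j ∈ range (n + 1), c (n - j) * h j) := by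
          rw [← this]; ring
      _ = ∑ j ∈ range (n + 1), (c j + c (n - j)) * h j := by
          rw [← Finset.sum_add_distrib]; apply sum_congr rfl; intro j _; ring
      _ = _ := by
          apply sum_congr rfl; intro j hj; rw [cpt j hj]
  -- main remaining identity
  have key2 : ∑ j ∈ range (n + 1), ((j : ℤ) - m) * ((j : ℤ) - m - 1) * h j
      = 2 * ∑ k ∈ Icc 1 m, (k : ℤ) * (k + 1) * h (m - k) := by
    set F : ℕ → ℤ := fun j => ((j : ℤ) - m) * ((j : ℤ) - m - 1) * h j with hF
    have split : ∑ j ∈ range (n + 1), F j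
        = (∑ j ∈ range (m + 1), F j) + ∑ j ∈ Ico (m + 1) (n + 1), F j := by
      rw [range_eq_Ico, range_eq_Ico]
      exact (Finset.sum_Ico_consecutive F (m := 0) (n := m + 1) (k := n + 1) (by omega) (by omega)).symm
    have refl2 : ∑ j ∈ Ico (m + 1) (n + 1), F j = ∑ j ∈ range (m + 1), F (n - j) := by
      have hr := Finset.sum_Ico_reflect F 0 (show m + 1 ≤ n + 1 by omega)
      rw [show n + 1 - (m + 1) = m + 1 by omega, show n + 1 - 0 = n + 1 by omega] at hr
      rw [range_eq_Ico, ← hr]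
    have Fsym : ∀ j ∈ range (m + 1), F (n - j) = F j := by
      intro j hj
      simp only [mem_range] at hj
      have hjn : j ≤ n := by omega
      simp only [hF]
      have hcast : ((n - j : ℕ) : ℤ) = (n : ℤ) - (j : ℤ) := by
        push_cast [Nat.cast_sub hjn]; ring
      have hh : h (n - j) = h j := (hsym j hjn).symm
      rw [hcast, hh]
      have hnc : (n : ℤ) = 2 * (m : ℤ) + 1 := by rw [hn]; push_cast; ring
      rw [hnc]; ring
    have last : ∑ j ∈ range (m + 1), F j = ∑ k ∈ Icc 1 m, (k : ℤ) * (k + 1) * h (m - k) := by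
      have ex : ∑ k ∈ Icc 1 m, (k : ℤ) * (k + 1) * h (m - k)
          = ∑ k ∈ range (m + 1), (k : ℤ) * (k + 1) * h (m - k) := by
        apply sum_subset
        · intro l hl; simp only [mem_Icc] at hl; simp only [mem_range]; omega
        · intro l hl hnl
          simp only [mem_range] at hl
          simp only [mem_Icc] at hnl
          have : l = 0 := by omega
          simp [this]
      rw [ex, ← Finset.sum_range_reflect (fun k => (k : ℤ) * (k + 1) * h (m - k)) (m + 1)]
      apply sum_congr rfl
      intro j hj
      simp only [mem_range] at hj
      have h1 : m + 1 - 1 - j = m - j := by omega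
      have h2 : m - (m - j) = j := by omega
      have hcast : ((m - j : ℕ) : ℤ) = (m : ℤ) - (j : ℤ) := by
        push_cast [Nat.cast_sub (show j ≤ m by omega)]; ring
      simp only [hF, h1, h2, hcast]
      ring
    calc ∑ j ∈ range (n + 1), F j
        = (∑ j ∈ range (m + 1), F j) + ∑ j ∈ range (m + 1), F (n - j) := by rw [split, refl2]
      _ = (∑ j ∈ range (m + 1), F j) + ∑ j ∈ range (m + 1), F j := by
          congr 1; exact sum_congr rfl Fsym
      _ = 2 * ∑ k ∈ Icc 1 m, (k : ℤ) * (k + 1) * h (m - k) := by rw [last]; ring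
  -- finish
  have expand : ∑ j ∈ range (n + 1), (12 * ((j : ℤ) - m) * ((j : ℤ) - m - 1) - 2 * ((m : ℤ) - 1)) * h j
      = 12 * (∑ j ∈ range (n + 1), ((j : ℤ) - m) * ((j : ℤ) - m - 1) * h j)
        - 2 * ((m : ℤ) - 1) * ∑ j ∈ range (n + 1), h j := by
    rw [Finset.mul_sum, Finset.mul_sum, ← Finset.sum_sub_distrib]
    apply sum_congr rfl
    intro j _
    ring
  have hrange : n + 1 = 2 * m + 2 := by omega
  have final := doub
  rw [expand, key2] at final
  rw [hrange] at final
  linarith [final]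
end

section
/- Let N ≥ 1, λ ∈ {1, ..., N}, and let A_0, A_1, ..., A_N and b_1, ..., b_N be integers such that: b_1 ≤ b_2 ≤ ... ≤ b_N and b_1 ≥ 1; A_i ≥ 0 for 1 ≤ i < λ; A_i ≤ 0 for λ ≤ i ≤ N; S := Σ_{i=1}^{N} A_i < 0; and 0 ≤ A_0 + Σ_{i=1}^{N} A_i·b_i. Then (-S)·b_λ ≤ A_0. -/
/-- Abstract inequality bounding `b λ`: if the coefficients `A i` change sign from
nonnegative to nonpositive at index `λ`, `b` is nondecreasing and positive, the total
sum `S` of the `A i` (for `i ≥ 1`) is negative, and `A 0 + Σ A i b i ≥ 0`, then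
`(-S) · b λ ≤ A 0`. -/
theorem stmt_11 (N : ℕ) (hN : 1 ≤ N) (lam : ℕ) (hlam : 1 ≤ lam ∧ lam ≤ N)
    (A b : ℕ → ℤ)
    (hmono : ∀ i j, 1 ≤ i → i ≤ j → j ≤ N → b i ≤ b j) (hb1 : 1 ≤ b 1)
    (hApos : ∀ i, 1 ≤ i → i < lam → 0 ≤ A i)
    (hAneg : ∀ i, lam ≤ i → i ≤ N → A i ≤ 0)
    (hS : ∑ i ∈ Finset.Icc 1 N, A i < 0)
    (hnn : 0 ≤ A 0 + ∑ i ∈ Finset.Icc 1 N, A i * b i) :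
    (-(∑ i ∈ Finset.Icc 1 N, A i)) * b lam ≤ A 0 := by
  have key : ∑ i ∈ Finset.Icc 1 N, A i * b i ≤ ∑ i ∈ Finset.Icc 1 N, A i * b lam := by
    apply Finset.sum_le_sum
    intro i hi
    rw [Finset.mem_Icc] at hi
    rcases lt_or_ge i lam with h | h
    · exact mul_le_mul_of_nonneg_left (hmono i lam hi.1 h.le hlam.2) (hApos i hi.1 h)
    · exact mul_le_mul_of_nonpos_left (hmono lam i hlam.1 h hi.2) (hAneg i h hi.2)
  calc (-(∑ i ∈ Finset.Icc 1 N, A i)) * b lam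
      = -(∑ i ∈ Finset.Icc 1 N, A i * b lam) := by
        rw [← Finset.sum_mul]; ring
    _ ≤ -(∑ i ∈ Finset.Icc 1 N, A i * b i) := by linarith
    _ ≤ A 0 := by linarith
end

section
/- Let u, v ∈ ℝ^n, let w ∈ ℤ^n be primitive with v - u = l·w for some real l, and suppose there are vectors w_1, ..., w_n and w~_1, ..., w~_n in ℤ^n with w_1 = w, w~_1 = -w, Σ_{j=1}^{n} w_j = -u, Σ_{j=1}^{n} w~_j = -v, and a bijection σ of {2, ..., n} together with integers a_2, ..., a_n such that w_i - w~_{σ(i)} = a_i·w for each i = 2, ..., n. Then l = 2 + Σ_{i=2}^{n} a_i. -/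
/-- The lattice-algebra core of the relative-length computation: with the reflexivity
conditions `Σ wⱼ = -u`, `Σ w̃ⱼ = -v`, weight `w` along the edge reversing sign, and the
remaining weights paired via `wᵢ - w̃_{σ(i)} = aᵢ • w`, one gets `l = 2 + Σ aᵢ`. -/
theorem stmt_15 (n : ℕ) [NeZero n] (u v : Fin n → ℝ) (w : Fin n → ℤ)
    (hprim : ∀ (m : ℤ) (w' : Fin n → ℤ), w = m • w' → m = 1 ∨ m = -1)
    (l : ℝ) (hl : v - u = l • fun j => (w j : ℝ))
    (W T : Fin n → Fin n → ℤ)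
    (hW0 : W 0 = w) (hT0 : T 0 = -w)
    (hsumW : ∀ i, ((∑ j, W j i : ℤ) : ℝ) = -u i)
    (hsumT : ∀ i, ((∑ j, T j i : ℤ) : ℝ) = -v i)
    (σ : Equiv.Perm (Fin n)) (hσ0 : σ 0 = 0)
    (a : Fin n → ℤ)
    (ha : ∀ i : Fin n, i ≠ 0 → W i - T (σ i) = a i • w) :
    l = 2 + ((∑ i ∈ Finset.univ.filter (fun i : Fin n => i ≠ 0), a i : ℤ) : ℝ) := by
  classical
  set S : Finset (Fin n) := Finset.univ.filter (fun i : Fin n => i ≠ 0) with hS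
  set c : ℤ := 2 + ∑ i ∈ S, a i with hc
  -- key: ∀ i, v i - u i = (c : ℝ) * w i
  have key : ∀ i, l * (w i : ℝ) = (c : ℝ) * (w i : ℝ) := by
    intro i
    have hvu : v i - u i = ((∑ j, W j i : ℤ) : ℝ) - ((∑ j, T j i : ℤ) : ℝ) := by
      rw [hsumW, hsumT]; ring
    have hTσ : (∑ j, T j i : ℤ) = ∑ j, T (σ j) i :=
      (Equiv.sum_comp σ (fun j => T j i)).symm
    have hsum : (∑ j, W j i : ℤ) - (∑ j, T (σ j) i) = c * w i := by
      rw [← Finset.sum_sub_distrib]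
      have hsplit : (∑ j, (W j i - T (σ j) i) : ℤ)
          = (W 0 i - T (σ 0) i) + ∑ j ∈ S, (W j i - T (σ j) i) := by
        rw [hS, ← Finset.sum_filter_add_sum_filter_not Finset.univ
          (fun j : Fin n => j ≠ 0) (fun j => W j i - T (σ j) i)]
        have : Finset.univ.filter (fun j : Fin n => ¬ j ≠ 0) = {0} := by
          ext j; simp
        rw [this, Finset.sum_singleton, add_comm]
      rw [hsplit, hσ0, hW0, hT0]
      have h2 : ∀ j ∈ S, W j i - T (σ j) i = a j * w i := by
        intro j hj
        have hj0 : j ≠ 0 := by simpa [hS] using hj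
        have := congrFun (ha j hj0) i
        simpa using this
      rw [Finset.sum_congr rfl h2, hc]
      simp [Finset.sum_mul, add_mul]
      ring
    have hlw : v i - u i = l * (w i : ℝ) := by
      have := congrFun hl i
      simpa using this
    have : l * (w i : ℝ) = ((c * w i : ℤ) : ℝ) := by
      rw [← hlw, hvu, ← hsum]; push_cast [hTσ]; ring
    simpa using this
  -- w ≠ 0
  have hw : ∃ i, w i ≠ 0 := by
    by_contra h
    push_neg at h
    have : w = (0 : ℤ) • w := by
      funext i; simp [h i]
    rcases hprim 0 w this with h0 | h0 <;> simp at h0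
  obtain ⟨i, hi⟩ := hw
  have hwi : (w i : ℝ) ≠ 0 := Int.cast_ne_zero.mpr hi
  have := mul_right_cancel₀ hwi (key i)
  rw [this, hc]
  push_cast
  ring
end

section
/- Let Φ be a crystallographic root system with positive roots Φ⁺ and simple roots Δ, let I ⊆ Δ, ⟨I⟩ the positive roots in the span of I, and W_I the parabolic subgroup generated by {s_α : α ∈ I}. If w ∈ W satisfies w(Φ⁺ \ ⟨I⟩) = Φ⁺ \ ⟨I⟩ (as a set), then w ∈ W_I. -/
theorem Equiv.Perm.apply_inv_self {α : Type*} (σ : Equiv.Perm α) (x : α) : σ (σ⁻¹ x) = x :=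
  Equiv.apply_symm_apply σ x

namespace Stmt17Aux

variable {E : Type*} [NormedAddCommGroup E] [InnerProductSpace ℝ E]

noncomputable def preRefl (α x : E) : E :=
  x - (2 * (inner ℝ x α : ℝ) / (inner ℝ α α : ℝ)) • α

lemma inner_preRefl (α x : E) (hα : (inner ℝ α α : ℝ) ≠ 0) :
    (inner ℝ (preRefl α x) α : ℝ) = - inner ℝ x α := by
  simp only [preRefl, inner_sub_left, real_inner_smul_left]
  field_simp
  ring

lemma preRefl_invol (α : E) (hα : (inner ℝ α α : ℝ) ≠ 0) (x : E) :
    preRefl α (preRefl α x) = x := by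
  have h := inner_preRefl α x hα
  simp only [preRefl] at h ⊢
  rw [h]
  module

noncomputable def rfl' (α : E) : Equiv.Perm E :=
  if h : (inner ℝ α α : ℝ) = 0 then 1 else
    ⟨preRefl α, preRefl α, preRefl_invol α h, preRefl_invol α h⟩

lemma rfl'_apply (α : E) (h : (inner ℝ α α : ℝ) ≠ 0) (x : E) :
    rfl' α x = x - (2 * (inner ℝ x α : ℝ) / (inner ℝ α α : ℝ)) • α := by
  rw [rfl', dif_neg h]; rfl

lemma rfl'_inv (α : E) : (rfl' α)⁻¹ = rfl' α := by
  by_cases h : (inner ℝ α α : ℝ) = 0 <;> simp only [rfl', h, dite_true, dite_false, not_false_eq_true] <;> rfl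

end Stmt17Aux

namespace Stmt17Aux
variable {E : Type*} [NormedAddCommGroup E] [InnerProductSpace ℝ E]

lemma rfl'_self (α : E) (h : (inner ℝ α α : ℝ) ≠ 0) : rfl' α α = -α := by
  rw [rfl'_apply α h]
  rw [mul_div_assoc, div_self h]
  module

def IsLin (σ : Equiv.Perm E) : Prop := ∀ (a : ℝ) (x y : E), σ (x + a • y) = σ x + a • σ y

def IsOrth (σ : Equiv.Perm E) : Prop := ∀ x y : E, (inner ℝ (σ x) (σ y) : ℝ) = inner ℝ x y

lemma rfl'_lin (α : E) : IsLin (rfl' α) := by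
  intro a x y
  by_cases h : (inner ℝ α α : ℝ) = 0
  · rw [rfl', dif_pos h]; simp
  · simp only [rfl'_apply α h, inner_add_left, real_inner_smul_left]
    match_scalars <;> field_simp <;> ring

lemma rfl'_orth (α : E) : IsOrth (rfl' α) := by
  intro x y
  by_cases h : (inner ℝ α α : ℝ) = 0
  · rw [rfl', dif_pos h]; simp
  · simp only [rfl'_apply α h, inner_sub_left, inner_sub_right,
      real_inner_smul_left, real_inner_smul_right]
    field_simp
    ring_nf
    rw [real_inner_comm α y]
    ring

end Stmt17Aux

namespace Stmt17Aux
variable {E : Type*} [NormedAddCommGroup E] [InnerProductSpace ℝ E]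

lemma IsLin.map_zero {σ : Equiv.Perm E} (h : IsLin σ) : σ 0 = 0 := by
  have := h 1 0 0
  simp at this
  linear_combination (norm := abel) this

lemma IsLin.map_smul {σ : Equiv.Perm E} (h : IsLin σ) (a : ℝ) (x : E) :
    σ (a • x) = a • σ x := by
  have := h a 0 x
  simpa [h.map_zero] using this

lemma IsLin.map_add {σ : Equiv.Perm E} (h : IsLin σ) (x y : E) :
    σ (x + y) = σ x + σ y := by
  have := h 1 x y
  simpa using this

lemma IsLin.map_neg {σ : Equiv.Perm E} (h : IsLin σ) (x : E) : σ (-x) = -σ x := by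
  have := h.map_smul (-1) x
  simpa using this

lemma IsLin.map_sub {σ : Equiv.Perm E} (h : IsLin σ) (x y : E) :
    σ (x - y) = σ x - σ y := by
  rw [sub_eq_add_neg, h.map_add, h.map_neg, sub_eq_add_neg]

lemma IsLin.map_sum {σ : Equiv.Perm E} (h : IsLin σ) {ι : Type*} (s : Finset ι)
    (f : ι → ℝ) (g : ι → E) : σ (∑ i ∈ s, f i • g i) = ∑ i ∈ s, f i • σ (g i) := by
  classical
  induction s using Finset.induction with
  | empty => simpa using h.map_zero
  | insert _ _ hni ih =>
    rw [Finset.sum_insert hni, Finset.sum_insert hni, h.map_add, h.map_smul, ih]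

lemma IsLin.inv {σ : Equiv.Perm E} (h : IsLin σ) : IsLin σ⁻¹ := by
  intro a x y
  apply σ.injective
  rw [Equiv.Perm.apply_inv_self, h, Equiv.Perm.apply_inv_self, Equiv.Perm.apply_inv_self]

lemma rfl'_smul {c : ℝ} (hc : c ≠ 0) (α : E) : rfl' (c • α) = rfl' α := by
  have hq : (inner ℝ (c • α) (c • α) : ℝ) = c ^ 2 * inner ℝ α α := by
    rw [real_inner_smul_left, real_inner_smul_right]; ring
  by_cases h : (inner ℝ α α : ℝ) = 0
  · have : (inner ℝ (c • α) (c • α) : ℝ) = 0 := by rw [hq, h]; ring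
    rw [rfl', rfl', dif_pos h, dif_pos this]
  · have h' : (inner ℝ (c • α) (c • α) : ℝ) ≠ 0 := by
      rw [hq]; positivity
    ext x
    rw [rfl'_apply _ h', rfl'_apply _ h, hq, real_inner_smul_right]
    match_scalars
    · ring
    · field_simp

lemma conj_rfl' (v : Equiv.Perm E) (hl : IsLin v) (ho : IsOrth v) (β : E) :
    v * rfl' β * v⁻¹ = rfl' (v β) := by
  have hq : (inner ℝ (v β) (v β) : ℝ) = inner ℝ β β := ho β β
  by_cases h : (inner ℝ β β : ℝ) = 0
  · have h2 : (inner ℝ (v β) (v β) : ℝ) = 0 := by rw [hq, h]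
    ext x
    rw [rfl', rfl', dif_pos h, dif_pos h2]; simp
  · have h2 : (inner ℝ (v β) (v β) : ℝ) ≠ 0 := by rw [hq]; exact h
    ext x
    rw [Equiv.Perm.mul_apply, Equiv.Perm.mul_apply, rfl'_apply _ h2, rfl'_apply _ h]
    have : (inner ℝ (v⁻¹ x) β : ℝ) = inner ℝ x (v β) := by
      conv_rhs => rw [← Equiv.Perm.apply_inv_self v x]
      rw [ho]
    rw [this, hq, sub_eq_add_neg, ← neg_smul, hl, Equiv.Perm.apply_inv_self,
      neg_smul, ← sub_eq_add_neg]

end Stmt17Aux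

namespace Stmt17Aux

variable {E : Type*} [NormedAddCommGroup E] [InnerProductSpace ℝ E]

section
variable {Φ Φp Δ I : Finset E}

-- nonzero inner ℝ product for roots
lemma hq_of_mem (hΦ0 : (0:E) ∉ Φ) {α : E} (hα : α ∈ Φ) : (inner ℝ α α : ℝ) ≠ 0 := by
  intro h
  rw [inner_self_eq_zero] at h
  exact hΦ0 (h ▸ hα)

-- linear independence evaluation
lemma eval_zero (hind : LinearIndependent ℝ (fun α : Δ => (α : E))) (e : E → ℝ)
    (h : ∑ δ ∈ Δ, e δ • δ = 0) : ∀ δ ∈ Δ, e δ = 0 := by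
  classical
  have h2 : ∑ δ : Δ, e δ • (δ : E) = 0 := by
    rw [Finset.sum_coe_sort Δ (fun δ => e δ • δ)]
    exact h
  have := Fintype.linearIndependent_iff.mp hind (fun δ : Δ => e δ) h2
  intro δ hδ
  exact this ⟨δ, hδ⟩

def posC (Δ : Finset E) (x : E) : Prop :=
  ∃ f : E → ℝ, (∀ δ, 0 ≤ f δ) ∧ x = ∑ δ ∈ Δ, f δ • δ

lemma posC_zero : posC Δ (0:E) := ⟨0, fun _ => le_refl 0, by simp⟩

lemma posC_add {x y : E} (hx : posC Δ x) (hy : posC Δ y) : posC Δ (x + y) := by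
  obtain ⟨f, hf, rfl⟩ := hx
  obtain ⟨g, hg, rfl⟩ := hy
  exact ⟨f + g, fun δ => add_nonneg (hf δ) (hg δ), by
    rw [← Finset.sum_add_distrib]; exact Finset.sum_congr rfl fun δ _ => by
      simp [add_smul]⟩

lemma posC_smul {x : E} {c : ℝ} (hc : 0 ≤ c) (hx : posC Δ x) : posC Δ (c • x) := by
  obtain ⟨f, hf, rfl⟩ := hx
  exact ⟨fun δ => c * f δ, fun δ => mul_nonneg hc (hf δ), by
    rw [Finset.smul_sum]; exact Finset.sum_congr rfl fun δ _ => (smul_smul c (f δ) δ)⟩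

lemma posC_of_mem_Φp (hsimple : ∀ β ∈ Φp, ∃ c : E → ℕ, β = ∑ α ∈ Δ, (c α : ℝ) • α)
    {β : E} (hβ : β ∈ Φp) : posC Δ β := by
  obtain ⟨c, hc⟩ := hsimple β hβ
  exact ⟨fun δ => (c δ : ℝ), fun δ => Nat.cast_nonneg _, hc⟩

lemma eq_zero_of_posC_posC (hind : LinearIndependent ℝ (fun α : Δ => (α : E)))
    {β : E} (h1 : posC Δ β) (h2 : posC Δ (-β)) : β = 0 := by
  obtain ⟨f, hf, hfe⟩ := h1
  obtain ⟨g, hg, hge⟩ := h2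
  have hsum : ∑ δ ∈ Δ, (f δ + g δ) • δ = 0 := by
    have h0 : ∑ δ ∈ Δ, (f δ + g δ) • δ = (∑ δ ∈ Δ, f δ • δ) + ∑ δ ∈ Δ, g δ • δ := by
      rw [← Finset.sum_add_distrib]
      exact Finset.sum_congr rfl fun δ _ => by simp [add_smul]
    rw [h0, ← hfe, ← hge]
    abel
  have hz := eval_zero hind _ hsum
  rw [hfe]
  apply Finset.sum_eq_zero
  intro δ hδ
  have : f δ = 0 := le_antisymm (by
    have := hz δ hδ
    linarith [hg δ]) (hf δ)
  simp [this]

lemma mem_Φp_of_posC (hΦ0 : (0:E) ∉ Φ)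
    (hpos : ∀ α ∈ Φ, (α ∈ Φp ∧ -α ∉ Φp) ∨ (α ∉ Φp ∧ -α ∈ Φp))
    (hind : LinearIndependent ℝ (fun α : Δ => (α : E)))
    (hsimple : ∀ β ∈ Φp, ∃ c : E → ℕ, β = ∑ α ∈ Δ, (c α : ℝ) • α)
    {β : E} (hβΦ : β ∈ Φ) (hβ : posC Δ β) : β ∈ Φp := by
  rcases hpos β hβΦ with ⟨h, _⟩ | ⟨_, h⟩
  · exact h
  · exfalso
    have := eq_zero_of_posC_posC hind hβ (posC_of_mem_Φp hsimple h)
    exact hΦ0 (this ▸ hβΦ)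

lemma neg_notin_Φp (hΦpΦ : Φp ⊆ Φ)
    (hpos : ∀ α ∈ Φ, (α ∈ Φp ∧ -α ∉ Φp) ∨ (α ∉ Φp ∧ -α ∈ Φp))
    {β : E} (hβ : β ∈ Φp) : -β ∉ Φp := by
  rcases hpos β (hΦpΦ hβ) with ⟨_, h⟩ | ⟨h, _⟩
  · exact h
  · exact absurd hβ h

lemma neg_mem_Φp (hpos : ∀ α ∈ Φ, (α ∈ Φp ∧ -α ∉ Φp) ∨ (α ∉ Φp ∧ -α ∈ Φp))
    {β : E} (hβΦ : β ∈ Φ) (hβ : β ∉ Φp) : -β ∈ Φp := by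
  rcases hpos β hβΦ with ⟨h, _⟩ | ⟨_, h⟩
  · exact absurd h hβ
  · exact h

end

end Stmt17Aux

namespace Stmt17Aux
variable {E : Type*} [NormedAddCommGroup E] [InnerProductSpace ℝ E]
variable {Φ Φp Δ I : Finset E}

lemma mem_I_of_mem_span (hind : LinearIndependent ℝ (fun α : Δ => (α : E)))
    (hI : I ⊆ Δ) {β : E} (hβΔ : β ∈ Δ)
    (hsp : β ∈ Submodule.span ℝ (I : Set E)) : β ∈ I := by
  classical
  rw [Submodule.mem_span_finset] at hsp
  obtain ⟨f, -, hf⟩ := hsp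
  have hsum : ∑ δ ∈ Δ, ((if δ ∈ I then f δ else 0) - (if δ = β then 1 else 0)) • δ = 0 := by
    simp only [sub_smul, ite_smul, zero_smul, one_smul, Finset.sum_sub_distrib]
    rw [Finset.sum_ite_mem, Finset.inter_eq_right.mpr hI, hf,
      Finset.sum_ite_eq' Δ β (fun δ => δ), if_pos hβΔ, sub_self]
  have := eval_zero hind _ hsum β hβΔ
  by_contra hβI
  rw [if_neg hβI, if_pos rfl] at this
  norm_num at this

lemma span_multiple (hΦ0 : (0:E) ∉ Φ) (hΦpΦ : Φp ⊆ Φ)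
    (hind : LinearIndependent ℝ (fun α : Δ => (α : E)))
    (hsimple : ∀ β ∈ Φp, ∃ c : E → ℕ, β = ∑ α ∈ Δ, (c α : ℝ) • α)
    {α β : E} (hα : α ∈ Δ) (hβ : β ∈ Φp)
    (hsp : β ∈ Submodule.span ℝ ({α} : Set E)) : ∃ c : ℝ, 0 < c ∧ β = c • α := by
  classical
  rw [Submodule.mem_span_singleton] at hsp
  obtain ⟨c, hc⟩ := hsp
  obtain ⟨f, hf, hfe⟩ := posC_of_mem_Φp hsimple hβ
  have hsum : ∑ δ ∈ Δ, (f δ - (if δ = α then c else 0)) • δ = 0 := by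
    simp only [sub_smul, ite_smul, zero_smul, Finset.sum_sub_distrib]
    rw [← hfe, Finset.sum_ite_eq' Δ α (fun δ => c • δ), if_pos hα, ← hc, sub_self]
  have hfα := eval_zero hind _ hsum α hα
  rw [if_pos rfl] at hfα
  have hcα : c = f α := by linarith
  refine ⟨c, ?_, hc.symm⟩
  rcases lt_or_eq_of_le (hcα ▸ hf α) with h | h
  · exact h
  · exfalso
    apply hΦ0
    have : β = 0 := by rw [← hc, ← h, zero_smul]
    exact this ▸ hΦpΦ hβ

/-- Key lemma: a simple reflection `rfl' α` maps a positive root not proportional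
to `α` to a positive root not proportional to `α`. -/
lemma refl_pos (hΦ0 : (0:E) ∉ Φ)
    (hrefl : ∀ α ∈ Φ, ∀ β ∈ Φ, β - (2 * (inner ℝ β α : ℝ) / (inner ℝ α α : ℝ)) • α ∈ Φ)
    (hΦpΦ : Φp ⊆ Φ)
    (hpos : ∀ α ∈ Φ, (α ∈ Φp ∧ -α ∉ Φp) ∨ (α ∉ Φp ∧ -α ∈ Φp))
    (hΔ : Δ ⊆ Φp)
    (hind : LinearIndependent ℝ (fun α : Δ => (α : E)))
    (hsimple : ∀ β ∈ Φp, ∃ c : E → ℕ, β = ∑ α ∈ Δ, (c α : ℝ) • α)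
    {α β : E} (hα : α ∈ Δ) (hβ : β ∈ Φp)
    (hsp : β ∉ Submodule.span ℝ ({α} : Set E)) :
    rfl' α β ∈ Φp ∧ rfl' α β ∉ Submodule.span ℝ ({α} : Set E) := by
  classical
  have hαΦ : α ∈ Φ := hΦpΦ (hΔ hα)
  have hβΦ : β ∈ Φ := hΦpΦ hβ
  have hqα := hq_of_mem hΦ0 hαΦ
  set k : ℝ := 2 * (inner ℝ β α : ℝ) / (inner ℝ α α : ℝ) with hk
  have happ : rfl' α β = β - k • α := rfl'_apply α hqα β
  have hγΦ : rfl' α β ∈ Φ := by rw [happ]; exact hrefl α hαΦ β hβΦ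
  have hspan : rfl' α β ∉ Submodule.span ℝ ({α} : Set E) := by
    intro h
    apply hsp
    have : β = rfl' α β + k • α := by rw [happ]; abel
    rw [this]
    exact Submodule.add_mem _ h (Submodule.smul_mem _ k (Submodule.mem_span_singleton_self α))
  refine ⟨?_, hspan⟩
  by_contra hγ
  have hnγ : -(rfl' α β) ∈ Φp := neg_mem_Φp hpos hγΦ hγ
  obtain ⟨f, hf, hfe⟩ := posC_of_mem_Φp hsimple hβ
  obtain ⟨g, hg, hge⟩ := posC_of_mem_Φp hsimple hnγ
  have hsum : ∑ δ ∈ Δ, (f δ + g δ - (if δ = α then k else 0)) • δ = 0 := by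
    simp only [sub_smul, add_smul, ite_smul, zero_smul, Finset.sum_sub_distrib,
      Finset.sum_add_distrib]
    rw [← hfe, ← hge, Finset.sum_ite_eq' Δ α (fun δ => k • δ), if_pos hα]
    have : -(rfl' α β) = -β + k • α := by rw [happ]; abel
    rw [this]
    abel
  have hz := eval_zero hind _ hsum
  apply hsp
  have hβα : β = f α • α := by
    rw [hfe]
    rw [Finset.sum_eq_single_of_mem α hα]
    intro δ hδ hne
    have := hz δ hδ
    rw [if_neg hne] at this
    have hfδ : f δ = 0 := by linarith [hg δ, hf δ]
    rw [hfδ, zero_smul]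
  rw [hβα]
  exact Submodule.smul_mem _ _ (Submodule.mem_span_singleton_self α)

/-- If a linear root-preserving map sends every simple root to a positive root,
it sends every positive root to a positive root. -/
lemma pos_of_simple_pos (hΦ0 : (0:E) ∉ Φ)
    (hpos : ∀ α ∈ Φ, (α ∈ Φp ∧ -α ∉ Φp) ∨ (α ∉ Φp ∧ -α ∈ Φp))
    (hΦpΦ : Φp ⊆ Φ)
    (hind : LinearIndependent ℝ (fun α : Δ => (α : E)))
    (hsimple : ∀ β ∈ Φp, ∃ c : E → ℕ, β = ∑ α ∈ Δ, (c α : ℝ) • α)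
    (σ : Equiv.Perm E) (hlin : IsLin σ) (hΦσ : ∀ β ∈ Φ, σ β ∈ Φ)
    (h : ∀ α ∈ Δ, σ α ∈ Φp) : ∀ β ∈ Φp, σ β ∈ Φp := by
  intro β hβ
  obtain ⟨f, hf, hfe⟩ := posC_of_mem_Φp hsimple hβ
  have hσβ : σ β = ∑ δ ∈ Δ, f δ • σ δ := by rw [hfe, hlin.map_sum]
  have hposC : posC Δ (σ β) := by
    rw [hσβ]
    apply Finset.sum_induction _ (posC Δ) (fun _ _ => posC_add) posC_zero
    intro δ hδ
    exact posC_smul (hf δ) (posC_of_mem_Φp hsimple (h δ hδ))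
  exact mem_Φp_of_posC hΦ0 hpos hind hsimple (hΦσ β (hΦpΦ hβ)) hposC

/-- Product of reflections along a list of roots. -/
noncomputable def wl (l : List E) : Equiv.Perm E := (l.map rfl').prod

lemma wl_nil : wl ([] : List E) = 1 := rfl

lemma wl_cons (a : E) (l : List E) : wl (a :: l) = rfl' a * wl l := by
  simp [wl]

lemma wl_concat (l : List E) (a : E) : wl (l ++ [a]) = wl l * rfl' a := by
  simp [wl]

lemma rfl'_mul_self (α : E) : rfl' α * rfl' α = 1 := by
  nth_rewrite 1 [← rfl'_inv α]
  exact inv_mul_cancel _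

lemma IsLin.mul {σ τ : Equiv.Perm E} (hσ : IsLin σ) (hτ : IsLin τ) : IsLin (σ * τ) := by
  intro a x y
  rw [Equiv.Perm.mul_apply, Equiv.Perm.mul_apply, Equiv.Perm.mul_apply, hτ, hσ]

lemma IsOrth.mul {σ τ : Equiv.Perm E} (hσ : IsOrth σ) (hτ : IsOrth τ) : IsOrth (σ * τ) := by
  intro x y
  rw [Equiv.Perm.mul_apply, Equiv.Perm.mul_apply, hσ, hτ]

lemma wl_lin (l : List E) : IsLin (wl l) := by
  induction l with
  | nil => intro a x y; simp [wl_nil]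
  | cons a t ih => rw [wl_cons]; exact (rfl'_lin a).mul ih

lemma wl_orth (l : List E) : IsOrth (wl l) := by
  induction l with
  | nil => intro x y; simp [wl_nil]
  | cons a t ih => rw [wl_cons]; exact (rfl'_orth a).mul ih

lemma wl_mem_Φ (hΦ0 : (0:E) ∉ Φ)
    (hrefl : ∀ α ∈ Φ, ∀ β ∈ Φ, β - (2 * (inner ℝ β α : ℝ) / (inner ℝ α α : ℝ)) • α ∈ Φ)
    {l : List E} (hl : ∀ α ∈ l, α ∈ Φ) : ∀ β ∈ Φ, wl l β ∈ Φ := by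
  induction l with
  | nil => intro β hβ; simpa [wl_nil] using hβ
  | cons a t ih =>
    intro β hβ
    have haΦ : a ∈ Φ := hl a (List.mem_cons_self)
    have ht : ∀ α ∈ t, α ∈ Φ := fun α hα => hl α (List.mem_cons_of_mem a hα)
    rw [wl_cons, Equiv.Perm.mul_apply, rfl'_apply a (hq_of_mem hΦ0 haΦ)]
    exact hrefl a haΦ _ (ih ht β hβ)

lemma wl_reverse (l : List E) : (wl l)⁻¹ = wl l.reverse := by
  induction l with
  | nil => simp [wl_nil]
  | cons a t ih =>
    rw [wl_cons, mul_inv_rev, ih, rfl'_inv, List.reverse_cons, wl_concat]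

/-- Deletion lemma: if a word sends the simple root `β` to a negative root, the word
multiplied by `rfl' β` can be expressed by a word shorter by one. -/
lemma deletion (hΦ0 : (0:E) ∉ Φ)
    (hrefl : ∀ α ∈ Φ, ∀ β ∈ Φ, β - (2 * (inner ℝ β α : ℝ) / (inner ℝ α α : ℝ)) • α ∈ Φ)
    (hΦpΦ : Φp ⊆ Φ)
    (hpos : ∀ α ∈ Φ, (α ∈ Φp ∧ -α ∉ Φp) ∨ (α ∉ Φp ∧ -α ∈ Φp))
    (hΔ : Δ ⊆ Φp)
    (hind : LinearIndependent ℝ (fun α : Δ => (α : E)))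
    (hsimple : ∀ β ∈ Φp, ∃ c : E → ℕ, β = ∑ α ∈ Δ, (c α : ℝ) • α) :
    ∀ (l : List E), (∀ α ∈ l, α ∈ Δ) → ∀ {β : E}, β ∈ Δ → wl l β ∉ Φp →
      ∃ l' : List E, (∀ α ∈ l', α ∈ Δ) ∧ l'.length + 1 = l.length ∧
        wl l' = wl l * rfl' β := by
  intro l
  induction l with
  | nil =>
    intro _ β hβΔ hneg
    exact absurd (hΔ hβΔ) (by simpa [wl_nil] using hneg)
  | cons a t ih =>
    intro hl β hβΔ hneg
    have haΔ : a ∈ Δ := hl a (List.mem_cons_self)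
    have ht : ∀ α ∈ t, α ∈ Δ := fun α hα => hl α (List.mem_cons_of_mem a hα)
    rw [wl_cons, Equiv.Perm.mul_apply] at hneg
    by_cases h : wl t β ∈ Φp
    · -- wl t β ∈ Φp but rfl' a (wl t β) ∉ Φp : wl t β is a positive multiple of a
      have hsp : wl t β ∈ Submodule.span ℝ ({a} : Set E) := by
        by_contra hsp
        exact hneg (refl_pos hΦ0 hrefl hΦpΦ hpos hΔ hind hsimple haΔ h hsp).1
      obtain ⟨c, hc, hce⟩ := span_multiple hΦ0 hΦpΦ hind hsimple haΔ h hsp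
      have hconj : wl t * rfl' β * (wl t)⁻¹ = rfl' a := by
        rw [conj_rfl' (wl t) (wl_lin t) (wl_orth t) β, hce, rfl'_smul (ne_of_gt hc)]
      have hkey : wl t * rfl' β = rfl' a * wl t := by
        calc wl t * rfl' β = wl t * rfl' β * (wl t)⁻¹ * wl t := by group
        _ = rfl' a * wl t := by rw [hconj]
      refine ⟨t, ht, by simp, ?_⟩
      rw [wl_cons, mul_assoc, hkey, ← mul_assoc, rfl'_mul_self, one_mul]
    · obtain ⟨t', ht', hlen, hprod⟩ := ih ht hβΔ h
      refine ⟨a :: t', ?_, ?_, ?_⟩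
      · intro α hα
        rcases List.mem_cons.mp hα with rfl | hα
        · exact haΔ
        · exact ht' α hα
      · simp only [List.length_cons]
        omega
      · rw [wl_cons, hprod, wl_cons, mul_assoc]

/-- An element of the Weyl group preserving the positive roots is the identity. -/
lemma eq_one_of_pos (hΦ0 : (0:E) ∉ Φ)
    (hrefl : ∀ α ∈ Φ, ∀ β ∈ Φ, β - (2 * (inner ℝ β α : ℝ) / (inner ℝ α α : ℝ)) • α ∈ Φ)
    (hΦpΦ : Φp ⊆ Φ)
    (hpos : ∀ α ∈ Φ, (α ∈ Φp ∧ -α ∉ Φp) ∨ (α ∉ Φp ∧ -α ∈ Φp))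
    (hΔ : Δ ⊆ Φp)
    (hind : LinearIndependent ℝ (fun α : Δ => (α : E)))
    (hsimple : ∀ β ∈ Φp, ∃ c : E → ℕ, β = ∑ α ∈ Δ, (c α : ℝ) • α) :
    ∀ (n : ℕ) (l : List E), l.length ≤ n → (∀ α ∈ l, α ∈ Δ) →
      (∀ β ∈ Φp, wl l β ∈ Φp) → wl l = 1 := by
  intro n
  induction n with
  | zero =>
    intro l hlen _ _
    rw [List.length_eq_zero_iff.mp (Nat.le_zero.mp hlen)]
    exact wl_nil
  | succ n ih =>
    intro l hlen hl hposl
    rcases List.eq_nil_or_concat l with rfl | ⟨t, a, rfl⟩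
    · exact wl_nil
    · simp only [List.concat_eq_append] at hlen hl hposl ⊢
      have haΔ : a ∈ Δ := hl a (by simp)
      have ht : ∀ α ∈ t, α ∈ Δ := fun α hα => hl α (by simp [hα])
      have haΦ : a ∈ Φ := hΦpΦ (hΔ haΔ)
      have hwa : wl (t ++ [a]) a = -(wl t a) := by
        rw [wl_concat, Equiv.Perm.mul_apply, rfl'_self a (hq_of_mem hΦ0 haΦ),
          (wl_lin t).map_neg]
      have hua : wl t a ∉ Φp := by
        intro hua
        have h1 : wl (t ++ [a]) a ∈ Φp := hposl a (hΔ haΔ)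
        rw [hwa] at h1
        exact neg_notin_Φp hΦpΦ hpos hua h1
      obtain ⟨t', ht', hlen', hprod⟩ :=
        deletion hΦ0 hrefl hΦpΦ hpos hΔ hind hsimple t ht haΔ hua
      have hprod' : wl t' = wl (t ++ [a]) := by rw [hprod, wl_concat]
      have hlen'' : t'.length ≤ n := by
        simp only [List.length_append, List.length_cons] at hlen ⊢
        omega
      rw [← hprod']
      apply ih t' hlen'' ht'
      intro β hβ
      rw [hprod']
      exact hposl β hβ

lemma wl_append (l1 l2 : List E) : wl (l1 ++ l2) = wl l1 * wl l2 := by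
  simp [wl]

lemma rfl'_invol_apply (α x : E) : rfl' α (rfl' α x) = x := by
  have h := rfl'_mul_self α (E := E)
  calc rfl' α (rfl' α x) = (rfl' α * rfl' α) x := rfl
  _ = x := by rw [h]; rfl

end Stmt17Aux


/-- If an element `w` of the Weyl group (generated by the simple reflections) maps the
set `Φ⁺ \ ⟨I⟩` onto itself, then `w` lies in the parabolic subgroup `W_I`. -/
theorem stmt_17 (E : Type*) [NormedAddCommGroup E] [InnerProductSpace ℝ E]
    (Φ : Finset E) (hΦ0 : (0 : E) ∉ Φ)
    (hrefl : ∀ α ∈ Φ, ∀ β ∈ Φ, β - (2 * (inner ℝ β α : ℝ) / (inner ℝ α α : ℝ)) • α ∈ Φ)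
    (hcrys : ∀ α ∈ Φ, ∀ β ∈ Φ, ∃ z : ℤ, (2 * (inner ℝ β α : ℝ) / (inner ℝ α α : ℝ)) = z)
    (Φp : Finset E) (hΦpΦ : Φp ⊆ Φ)
    (hpos : ∀ α ∈ Φ, (α ∈ Φp ∧ -α ∉ Φp) ∨ (α ∉ Φp ∧ -α ∈ Φp))
    (Δ : Finset E) (hΔ : Δ ⊆ Φp)
    (hind : LinearIndependent ℝ (fun α : Δ => (α : E)))
    (hsimple : ∀ β ∈ Φp, ∃ c : E → ℕ, β = ∑ α ∈ Δ, (c α : ℝ) • α)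
    (I : Finset E) (hI : I ⊆ Δ)
    (W WI : Subgroup (Equiv.Perm E))
    (hWdef : W = Subgroup.closure
      {σ : Equiv.Perm E | ∃ α ∈ Δ,
        ∀ x : E, σ x = x - (2 * (inner ℝ x α : ℝ) / (inner ℝ α α : ℝ)) • α})
    (hWI : WI = Subgroup.closure
      {σ : Equiv.Perm E | ∃ α ∈ I,
        ∀ x : E, σ x = x - (2 * (inner ℝ x α : ℝ) / (inner ℝ α α : ℝ)) • α})
    (w : Equiv.Perm E) (hw : w ∈ W)
    (hinv : (fun x => w x) ''
        {β : E | β ∈ Φp ∧ β ∉ Submodule.span ℝ (I : Set E)}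
      = {β : E | β ∈ Φp ∧ β ∉ Submodule.span ℝ (I : Set E)}) :
    w ∈ WI := by
  classical
  open Stmt17Aux in
  set S : Set E := {β : E | β ∈ Φp ∧ β ∉ Submodule.span ℝ (I : Set E)} with hS
  -- Step 1 : express `w` as a product of simple reflections
  rw [hWdef] at hw
  obtain ⟨l, hlΔ, rfl⟩ : ∃ l : List E, (∀ α ∈ l, α ∈ Δ) ∧ w = Stmt17Aux.wl l := by
    clear hinv
    induction hw using Subgroup.closure_induction with
    | mem σ hσ =>
      obtain ⟨α, hαΔ, hσ⟩ := hσ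
      have hαΦ : α ∈ Φ := hΦpΦ (hΔ hαΔ)
      refine ⟨[α], by simp [hαΔ], ?_⟩
      ext x
      rw [hσ x, Stmt17Aux.wl_cons, Stmt17Aux.wl_nil, mul_one,
        Stmt17Aux.rfl'_apply α (Stmt17Aux.hq_of_mem hΦ0 hαΦ)]
    | one => exact ⟨[], by simp, rfl⟩
    | mul x y hx hy ihx ihy =>
      obtain ⟨l1, h1, rfl⟩ := ihx
      obtain ⟨l2, h2, rfl⟩ := ihy
      refine ⟨l1 ++ l2, ?_, (Stmt17Aux.wl_append l1 l2).symm⟩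
      intro α hα
      rcases List.mem_append.mp hα with h | h
      · exact h1 α h
      · exact h2 α h
    | inv x hx ihx =>
      obtain ⟨l1, h1, rfl⟩ := ihx
      exact ⟨l1.reverse, fun α hα => h1 α (List.mem_reverse.mp hα),
        Stmt17Aux.wl_reverse l1⟩
  -- Reflections in roots of `I` stabilize `S`
  have hSI : ∀ β ∈ I, (fun x => Stmt17Aux.rfl' β x) '' S = S := by
    intro β hβI
    have hβΔ : β ∈ Δ := hI hβI
    have hβΦ : β ∈ Φ := hΦpΦ (hΔ hβΔ)
    have hqβ := Stmt17Aux.hq_of_mem hΦ0 hβΦ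
    have hβspI : β ∈ Submodule.span ℝ (I : Set E) :=
      Submodule.subset_span (by simpa using hβI)
    have hmaps : ∀ x ∈ S, Stmt17Aux.rfl' β x ∈ S := by
      intro x hx
      obtain ⟨hxp, hxsp⟩ := hx
      have hxβ : x ∉ Submodule.span ℝ ({β} : Set E) := by
        intro h
        exact hxsp (Submodule.span_mono (by simpa using hβI) h)
      obtain ⟨h1, -⟩ :=
        Stmt17Aux.refl_pos hΦ0 hrefl hΦpΦ hpos hΔ hind hsimple hβΔ hxp hxβ
      refine ⟨h1, ?_⟩
      intro hmem
      apply hxsp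
      have hxe : x = Stmt17Aux.rfl' β x
          + (2 * (inner ℝ x β : ℝ) / (inner ℝ β β : ℝ)) • β := by
        rw [Stmt17Aux.rfl'_apply β hqβ]; abel
      rw [hxe]
      exact Submodule.add_mem _ hmem (Submodule.smul_mem _ _ hβspI)
    apply Set.Subset.antisymm
    · rintro _ ⟨x, hx, rfl⟩
      exact hmaps x hx
    · intro x hx
      exact ⟨Stmt17Aux.rfl' β x, hmaps x hx, Stmt17Aux.rfl'_invol_apply β x⟩
  -- Main induction on the length of the word
  have key : ∀ n : ℕ, ∀ l : List E, l.length ≤ n → (∀ α ∈ l, α ∈ Δ) →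
      (fun x => Stmt17Aux.wl l x) '' S = S → Stmt17Aux.wl l ∈ WI := by
    intro n
    induction n with
    | zero =>
      intro l hlen _ _
      rw [List.length_eq_zero_iff.mp (Nat.le_zero.mp hlen), Stmt17Aux.wl_nil]
      exact Subgroup.one_mem WI
    | succ n ih =>
      intro l hlen hl hstab
      by_cases hall : ∀ α ∈ Δ, Stmt17Aux.wl l α ∈ Φp
      · -- no inversions : the word is the identity
        have hΦσ : ∀ β ∈ Φ, Stmt17Aux.wl l β ∈ Φ :=
          Stmt17Aux.wl_mem_Φ hΦ0 hrefl (fun α hα => hΦpΦ (hΔ (hl α hα)))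
        have hposall := Stmt17Aux.pos_of_simple_pos hΦ0 hpos hΦpΦ hind hsimple
          (Stmt17Aux.wl l) (Stmt17Aux.wl_lin l) hΦσ hall
        have h1 : Stmt17Aux.wl l = 1 :=
          Stmt17Aux.eq_one_of_pos hΦ0 hrefl hΦpΦ hpos hΔ hind hsimple
            l.length l le_rfl hl hposall
        rw [h1]
        exact Subgroup.one_mem WI
      · push_neg at hall
        obtain ⟨β, hβΔ, hβneg⟩ := hall
        have hβsp : (β : E) ∈ Submodule.span ℝ (I : Set E) := by
          by_contra hsp
          have hβS : β ∈ S := ⟨hΔ hβΔ, hsp⟩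
          have hmem : Stmt17Aux.wl l β ∈ S := by
            rw [← hstab]; exact ⟨β, hβS, rfl⟩
          exact hβneg hmem.1
        have hβI : β ∈ I := Stmt17Aux.mem_I_of_mem_span hind hI hβΔ hβsp
        obtain ⟨l', hl', hlen', hprod⟩ :=
          Stmt17Aux.deletion hΦ0 hrefl hΦpΦ hpos hΔ hind hsimple l hl hβΔ hβneg
        have hstab' : (fun x => Stmt17Aux.wl l' x) '' S = S := by
          have himg : (fun x => Stmt17Aux.wl l' x) '' S
              = (fun x => Stmt17Aux.wl l x) '' ((fun x => Stmt17Aux.rfl' β x) '' S) := by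
            rw [← Set.image_comp]
            apply Set.image_congr
            intro x _
            rw [hprod]
            rfl
          rw [himg, hSI β hβI, hstab]
        have hwl' : Stmt17Aux.wl l' ∈ WI := ih l' (by omega) hl' hstab'
        have hrβ : Stmt17Aux.rfl' β ∈ WI := by
          rw [hWI]
          apply Subgroup.subset_closure
          exact ⟨β, hβI, fun x =>
            Stmt17Aux.rfl'_apply β (Stmt17Aux.hq_of_mem hΦ0 (hΦpΦ (hΔ (hI hβI)))) x⟩
        have hfin : Stmt17Aux.wl l = Stmt17Aux.wl l' * Stmt17Aux.rfl' β := by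
          rw [hprod, mul_assoc, Stmt17Aux.rfl'_mul_self, mul_one]
        rw [hfin]
        exact Subgroup.mul_mem WI hwl' hrβ
  exact key l.length l le_rfl hlΔ hinv
end

section
/- Let n ≥ 2 and let h_0, h_1, ..., h_n be integers with h_0 = 1, h_j = h_{n-j} for all j, h_j ≤ h_{j+1} for all j ≤ n/2 - 1, and h_j ≥ 1 for all j. Suppose 0 ≤ C(n+2-1, n, h), where C(k_0, n, h) is defined for even n = 2m as Σ_{k=1}^{m}[12k^2 - n(k_0+1)]·h_{m-k} - m(k_0+1)·h_m and for odd n = 2m+1 as Σ_{k=1}^{m}[12k(k+1)+3-n(k_0+1)]·h_{m-k} - [n(k_0+1)-3]·h_m, with k_0 = n+1. Then h_j = 1 for all j = 0, ..., n. -/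
open Finset

private lemma swap_lemma (c e : ℕ → ℤ) :
    ∀ m : ℕ, ∑ k ∈ Icc 1 m, c k * (∑ i ∈ range k, e i)
      = ∑ i ∈ range m, e i * (∑ j ∈ Icc (i+1) m, c j) := by
  intro m
  induction m with
  | zero => simp
  | succ m ih =>
    rw [Finset.sum_Icc_succ_top (by omega : 1 ≤ m + 1)]
    have h1 : ∑ i ∈ range (m+1), e i * (∑ j ∈ Icc (i+1) (m+1), c j)
        = (∑ i ∈ range (m+1), e i * (∑ j ∈ Icc (i+1) m, c j))
          + (∑ i ∈ range (m+1), e i) * c (m+1) := by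
      rw [Finset.sum_mul, ← Finset.sum_add_distrib]
      refine Finset.sum_congr rfl fun i hi => ?_
      rw [Finset.sum_Icc_succ_top (by
        have := Finset.mem_range.mp hi; omega : i + 1 ≤ m + 1)]
      ring
    have h2 : ∑ i ∈ range (m+1), e i * (∑ j ∈ Icc (i+1) m, c j)
        = ∑ i ∈ range m, e i * (∑ j ∈ Icc (i+1) m, c j) := by
      rw [Finset.sum_range_succ, Finset.Icc_eq_empty (by omega : ¬ m + 1 ≤ m)]
      simp
    rw [h1, h2, ← ih]
    ring

private lemma key (m : ℕ) (c g : ℕ → ℤ)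
    (hT : ∀ k, 1 ≤ k → k ≤ m → 0 < ∑ j ∈ Icc k m, c j)
    (gmono : ∀ k, k < m → g (k+1) ≤ g k)
    (hC : (∑ k ∈ Icc 1 m, c k) * g 0 ≤ ∑ k ∈ Icc 1 m, c k * g k) :
    ∀ k ≤ m, g k = g 0 := by
  set e : ℕ → ℤ := fun i => g i - g (i+1) with he
  have hA : ∀ k, ∑ i ∈ range k, e i = g 0 - g k := fun k => Finset.sum_range_sub' g k
  have hsum : ∑ i ∈ range m, e i * (∑ j ∈ Icc (i+1) m, c j) ≤ 0 := by
    have h2 : ∑ k ∈ Icc 1 m, c k * (g 0 - g k)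
        = ∑ i ∈ range m, e i * (∑ j ∈ Icc (i+1) m, c j) := by
      rw [← swap_lemma c e m]
      exact Finset.sum_congr rfl fun k _ => by rw [hA]
    have h3 : ∑ k ∈ Icc 1 m, c k * (g 0 - g k)
        = (∑ k ∈ Icc 1 m, c k) * g 0 - ∑ k ∈ Icc 1 m, c k * g k := by
      rw [Finset.sum_mul, ← Finset.sum_sub_distrib]
      exact Finset.sum_congr rfl fun k _ => by ring
    rw [← h2, h3]
    linarith
  have hnonneg : ∀ i ∈ range m, 0 ≤ e i * (∑ j ∈ Icc (i+1) m, c j) := by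
    intro i hi
    have him := Finset.mem_range.mp hi
    exact mul_nonneg (sub_nonneg.mpr (gmono i him))
      (le_of_lt (hT (i+1) (by omega) him))
  have hzero := (Finset.sum_eq_zero_iff_of_nonneg hnonneg).mp
    (le_antisymm hsum (Finset.sum_nonneg hnonneg))
  have he0 : ∀ i, i < m → e i = 0 := by
    intro i hi
    rcases mul_eq_zero.mp (hzero i (Finset.mem_range.mpr hi)) with hh | hh
    · exact hh
    · exact absurd hh (ne_of_gt (hT (i+1) (by omega) hi))
  intro k hk
  have : g 0 - g k = 0 := by
    rw [← hA k]
    exact Finset.sum_eq_zero fun i hi =>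
      he0 i (lt_of_lt_of_le (Finset.mem_range.mp hi) hk)
  linarith

private lemma sum_sq (m : ℕ) :
    6 * ∑ j ∈ range m, (j:ℤ)^2 = (m:ℤ)*((m:ℤ)-1)*(2*(m:ℤ)-1) := by
  induction m with
  | zero => simp
  | succ m ih =>
    rw [Finset.sum_range_succ]
    push_cast
    push_cast at ih
    linear_combination ih

private lemma sum_id (m : ℕ) :
    2 * ∑ j ∈ range m, (j:ℤ) = (m:ℤ)*((m:ℤ)-1) := by
  induction m with
  | zero => simp
  | succ m ih =>
    rw [Finset.sum_range_succ]
    push_cast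
    push_cast at ih
    linear_combination ih

private lemma sum_quad (a b C : ℤ) (k m : ℕ) (hkm : k ≤ m + 1) :
    ∑ j ∈ Finset.Icc k m, (a*(j:ℤ)^2 + b*(j:ℤ) + C)
      = a * ((∑ j ∈ Finset.range (m+1), (j:ℤ)^2) - ∑ j ∈ Finset.range k, (j:ℤ)^2)
        + b * ((∑ j ∈ Finset.range (m+1), (j:ℤ)) - ∑ j ∈ Finset.range k, (j:ℤ))
        + C * ((m:ℤ) + 1 - (k:ℤ)) := by
  rw [← Finset.Ico_add_one_right_eq_Icc]
  rw [Finset.sum_add_distrib, Finset.sum_add_distrib]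
  rw [← Finset.mul_sum, ← Finset.mul_sum, Finset.sum_const, nsmul_eq_mul]
  rw [Finset.sum_Ico_eq_sub (fun j => ((j:ℤ))^2) hkm,
      Finset.sum_Ico_eq_sub (fun j => ((j:ℤ))) hkm,
      Nat.card_Ico]
  push_cast [Nat.cast_sub hkm]
  ring

private lemma tail_even (m k : ℕ) (N : ℤ) (hN : N = 2*(m:ℤ)) (hk : 1 ≤ k) (hkm : k ≤ m) :
    ∑ j ∈ Icc k m, (12*(j:ℤ)^2 - N*(N+2))
      = 2*(2*(k:ℤ)-1)*((m:ℤ)*((m:ℤ)+1) - (k:ℤ)*((k:ℤ)-1)) := by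
  subst hN
  have h1 : ∑ j ∈ Icc k m, (12*(j:ℤ)^2 - 2*(m:ℤ)*(2*(m:ℤ)+2))
      = ∑ j ∈ Icc k m, (12*(j:ℤ)^2 + 0*(j:ℤ) + (- (2*(m:ℤ)*(2*(m:ℤ)+2)))) :=
    Finset.sum_congr rfl fun j _ => by ring
  rw [h1, sum_quad _ _ _ k m (by omega)]
  have h2 := sum_sq (m+1)
  have h3 := sum_sq k
  push_cast at h2
  linear_combination 2 * h2 - 2 * h3

private lemma tail_odd (m k : ℕ) (N : ℤ) (hN : N = 2*(m:ℤ)+1) (hk : 1 ≤ k) (hkm : k ≤ m) :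
    ∑ j ∈ Icc k m, (12*(j:ℤ)*((j:ℤ)+1) + 3 - N*(N+2))
      = 4*(k:ℤ)*((m:ℤ)*((m:ℤ)+2) - (k:ℤ)^2 + 1) := by
  subst hN
  have h1 : ∑ j ∈ Icc k m, (12*(j:ℤ)*((j:ℤ)+1) + 3 - (2*(m:ℤ)+1)*((2*(m:ℤ)+1)+2))
      = ∑ j ∈ Icc k m, (12*(j:ℤ)^2 + 12*(j:ℤ) + (3 - (2*(m:ℤ)+1)*(2*(m:ℤ)+3))) :=
    Finset.sum_congr rfl fun j _ => by ring
  rw [h1, sum_quad _ _ _ k m (by omega)]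
  have h2 := sum_sq (m+1)
  have h3 := sum_sq k
  have h4 := sum_id (m+1)
  have h5 := sum_id k
  push_cast at h2 h4
  linear_combination 2 * h2 - 2 * h3 + 6 * h4 - 6 * h5

/-- If a symmetric, unimodal, positive integer `h`-vector with `h 0 = 1` satisfies the
nonnegativity constraint `0 ≤ C(n+1, n, h)` (index `k₀ = n + 1`), then `h` is the
all-ones vector. -/
theorem stmt_18 (n : ℕ) (hn : 2 ≤ n) (h : ℕ → ℤ) (h0 : h 0 = 1)
    (hsym : ∀ j ≤ n, h j = h (n - j))
    (huni : ∀ j : ℕ, j + 1 ≤ n / 2 → h j ≤ h (j + 1))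
    (hpos : ∀ j ≤ n, 1 ≤ h j)
    (hC : 0 ≤ (if 2 ∣ n then
        (∑ k ∈ Finset.Icc 1 (n / 2),
            (12 * (k : ℤ) ^ 2 - (n : ℤ) * ((n : ℤ) + 2)) * h (n / 2 - k))
          - (n / 2 : ℕ) * ((n : ℤ) + 2) * h (n / 2)
      else
        (∑ k ∈ Finset.Icc 1 (n / 2),
            (12 * (k : ℤ) * ((k : ℤ) + 1) + 3 - (n : ℤ) * ((n : ℤ) + 2)) * h (n / 2 - k))
          - ((n : ℤ) * ((n : ℤ) + 2) - 3) * h (n / 2))) :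
    ∀ j ≤ n, h j = 1 := by
  set m := n / 2 with hm
  have hm1 : 1 ≤ m := by omega
  have gmono : ∀ k, k < m → h (m - (k+1)) ≤ h (m - k) := by
    intro k hk
    have e1 : m - (k+1) = m - k - 1 := by omega
    have e2 : m - k - 1 + 1 = m - k := by omega
    rw [e1, ← e2]
    exact huni _ (by omega)
  have hgk : ∀ k ≤ m, h (m - k) = h (m - 0) := by
    by_cases hpar : 2 ∣ n
    · rw [if_pos hpar] at hC
      have hn2 : (n:ℤ) = 2*(m:ℤ) := by
        have : n = 2 * m := by omega
        exact_mod_cast this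
      have hT : ∀ k, 1 ≤ k → k ≤ m →
          0 < ∑ j ∈ Icc k m, (12*(j:ℤ)^2 - (n:ℤ)*((n:ℤ)+2)) := by
        intro k h1 h2
        rw [tail_even m k _ hn2 h1 h2]
        have hk1 : (1:ℤ) ≤ (k:ℤ) := by exact_mod_cast h1
        have hk2 : (k:ℤ) ≤ (m:ℤ) := by exact_mod_cast h2
        have ha : (0:ℤ) < 2*(k:ℤ)-1 := by linarith
        have hb : (0:ℤ) < (m:ℤ)*((m:ℤ)+1) - (k:ℤ)*((k:ℤ)-1) := by nlinarith
        nlinarith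
      have hS : (m:ℤ) * ((n:ℤ) + 2) = ∑ k ∈ Icc 1 m,
          (12*(k:ℤ)^2 - (n:ℤ)*((n:ℤ)+2)) := by
        rw [tail_even m 1 _ hn2 le_rfl hm1, hn2]
        push_cast
        ring
      rw [hS] at hC
      exact key m (fun k => 12*(k:ℤ)^2 - (n:ℤ)*((n:ℤ)+2)) (fun k => h (m - k))
        hT gmono (by simpa using hC)
    · rw [if_neg hpar] at hC
      have hn2 : (n:ℤ) = 2*(m:ℤ)+1 := by
        have : n = 2 * m + 1 := by omega
        exact_mod_cast this
      have hT : ∀ k, 1 ≤ k → k ≤ m →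
          0 < ∑ j ∈ Icc k m, (12*(j:ℤ)*((j:ℤ)+1) + 3 - (n:ℤ)*((n:ℤ)+2)) := by
        intro k h1 h2
        rw [tail_odd m k _ hn2 h1 h2]
        have hk1 : (1:ℤ) ≤ (k:ℤ) := by exact_mod_cast h1
        have hk2 : (k:ℤ) ≤ (m:ℤ) := by exact_mod_cast h2
        have hb : (0:ℤ) < (m:ℤ)*((m:ℤ)+2) - (k:ℤ)^2 + 1 := by nlinarith
        nlinarith
      have hS : (n:ℤ) * ((n:ℤ) + 2) - 3 = ∑ k ∈ Icc 1 m,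
          (12*(k:ℤ)*((k:ℤ)+1) + 3 - (n:ℤ)*((n:ℤ)+2)) := by
        rw [tail_odd m 1 _ hn2 le_rfl hm1, hn2]
        push_cast
        ring
      rw [hS] at hC
      exact key m (fun k => 12*(k:ℤ)*((k:ℤ)+1) + 3 - (n:ℤ)*((n:ℤ)+2)) (fun k => h (m - k))
        hT gmono (by simpa using hC)
  have hmm : h m = 1 := by
    have := hgk m le_rfl
    simp only [Nat.sub_self, Nat.sub_zero] at this
    rw [h0] at this
    exact this.symm
  have hle : ∀ j ≤ m, h j = 1 := by
    intro j hj
    have := hgk (m - j) (by omega)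
    have e1 : m - (m - j) = j := by omega
    rw [e1, Nat.sub_zero, hmm] at this
    exact this
  intro j hj
  by_cases hjm : j ≤ m
  · exact hle j hjm
  · rw [hsym j hj]
    exact hle (n - j) (by omega)
end
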